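/- Let γ and γ' be two mutually monotone circular curves consisting of m and m' circular arcs respectively. Then γ and γ' have O(m + m') proper intersection points; specifically, at most 2(m + m' + 1) proper intersection points. -/

import Mathlib

noncomputable section

abbrev Pt := EuclideanSpace ℝ (Fin 2)

/-- A set in the plane that is either a circle (of positive radius) or a line
(a segment counts as a circular arc of an "infinite circle"). -/
def IsCircleOrLine (C : Set Pt) : Prop :=
  (∃ c : Pt, ∃ r : ℝ, 0 < r ∧ C = Metric.sphere c r) ∨
  (∃ n : Pt, ∃ b : ℝ, n ≠ 0 ∧ C = {x : Pt | (inner ℝ n x : ℝ) = b})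

/-- `p` is a proper (isolated) intersection point of the sets `A` and `B`. -/
def IsProperIntersection (A B : Set Pt) (p : Pt) : Prop :=
  p ∈ A ∩ B ∧ ∃ U ∈ nhds p, U ∩ (A ∩ B) = {p}

/-- `f` parametrizes, over `[0,1]`, a `v`-monotone circular curve with image `γ`
consisting of `m` circular arcs delimited by the breakpoints `x 0 < x 1 < ⋯ < x m`. -/
def IsMonotoneCircularCurve (v : Pt) (f : ℝ → Pt) (γ : Set Pt) (m : ℕ) (x : ℕ → ℝ) :
    Prop :=
  ContinuousOn f (Set.Icc 0 1) ∧ f '' Set.Icc 0 1 = γ ∧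
  StrictMonoOn (fun t : ℝ => (inner ℝ v (f t) : ℝ)) (Set.Icc 0 1) ∧
  x 0 = 0 ∧ x m = 1 ∧ (∀ i < m, x i < x (i + 1)) ∧
  (∀ i < m, ∃ C : Set Pt, IsCircleOrLine C ∧ f '' Set.Icc (x i) (x (i + 1)) ⊆ C)

namespace Stmt10Aux

/-! ### Coordinates adapted to the direction `v` -/

def qq (v p : Pt) : ℝ := inner ℝ v p
def uu (v p : Pt) : ℝ := -(v 1) * p 0 + v 0 * p 1

lemma q_coord (v p : Pt) : qq v p = v 0 * p 0 + v 1 * p 1 := by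
  simp [qq, PiLp.inner_apply, Fin.sum_univ_two, RCLike.inner_apply, mul_comm]

lemma pt_ext {p p' : Pt} (h0 : p 0 = p' 0) (h1 : p 1 = p' 1) : p = p' := by
  ext i; fin_cases i <;> assumption

lemma hv_sq {v : Pt} (hv : ‖v‖ = 1) : v 0 ^ 2 + v 1 ^ 2 = 1 := by
  have h := congrArg (· ^ 2) hv
  simp only [EuclideanSpace.norm_eq, Fin.sum_univ_two] at h
  rw [Real.sq_sqrt (by positivity)] at h
  simpa using h

lemma inj2 {v p p' : Pt} (hv : v 0 ^ 2 + v 1 ^ 2 = 1)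
    (h1 : qq v p = qq v p') (h2 : uu v p = uu v p') : p = p' := by
  rw [q_coord, q_coord] at h1
  unfold uu at h2
  apply pt_ext
  · linear_combination v 0 * h1 - v 1 * h2 + (p' 0 - p 0) * hv
  · linear_combination v 1 * h1 + v 0 * h2 + (p' 1 - p 1) * hv

lemma dist_sq_eq {v : Pt} (hv : v 0 ^ 2 + v 1 ^ 2 = 1) (p c : Pt) :
    (qq v p - qq v c) ^ 2 + (uu v p - uu v c) ^ 2 = dist p c ^ 2 := by
  rw [EuclideanSpace.dist_eq, Real.sq_sqrt (by positivity), q_coord, q_coord]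
  unfold uu
  simp only [Real.dist_eq, Fin.sum_univ_two, sq_abs]
  linear_combination ((p 0 - c 0) ^ 2 + (p 1 - c 1) ^ 2) * hv

lemma sphere_mem_iff {v : Pt} (hv : v 0 ^ 2 + v 1 ^ 2 = 1) {c : Pt} {r : ℝ} (hr : 0 < r)
    (p : Pt) : p ∈ Metric.sphere c r ↔
      (qq v p - qq v c) ^ 2 + (uu v p - uu v c) ^ 2 = r ^ 2 := by
  rw [Metric.mem_sphere, dist_sq_eq hv]
  constructor
  · intro h; rw [h]
  · intro h
    have h1 : dist p c ^ 2 = r ^ 2 := h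
    have := dist_nonneg (x := p) (y := c)
    nlinarith

lemma inner_decomp {v : Pt} (hv : v 0 ^ 2 + v 1 ^ 2 = 1) (n p : Pt) :
    (inner ℝ n p : ℝ) = qq v n * qq v p + uu v n * uu v p := by
  have hh : (inner ℝ n p : ℝ) = n 0 * p 0 + n 1 * p 1 := q_coord n p
  rw [hh, q_coord, q_coord]; unfold uu
  linear_combination -(n 0 * p 0 + n 1 * p 1) * hv

lemma u_dist {v : Pt} (hv : v 0 ^ 2 + v 1 ^ 2 = 1) (a b : Pt) :
    |uu v a - uu v b| ≤ dist a b := by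
  have h2 : (uu v a - uu v b) ^ 2 ≤ dist a b ^ 2 := by
    rw [← dist_sq_eq hv a b]; nlinarith [sq_nonneg (qq v a - qq v b)]
  calc |uu v a - uu v b| = Real.sqrt ((uu v a - uu v b) ^ 2) := (Real.sqrt_sq_eq_abs _).symm
    _ ≤ Real.sqrt (dist a b ^ 2) := Real.sqrt_le_sqrt h2
    _ = dist a b := Real.sqrt_sq dist_nonneg

lemma ne_zero_coords {v n : Pt} (hv : v 0 ^ 2 + v 1 ^ 2 = 1) (hn : n ≠ 0) :
    qq v n ≠ 0 ∨ uu v n ≠ 0 := by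
  by_contra h
  push_neg at h
  apply hn
  apply inj2 hv (p' := 0)
  · show qq v n = qq v 0
    simp only [qq, inner_zero_right]
    exact h.1
  · show uu v n = uu v 0
    have h0 : uu v 0 = 0 := by simp [uu]
    rw [h0]
    exact h.2

lemma qq_sub (v a b : Pt) : qq v (a - b) = qq v a - qq v b := by
  simp [qq, inner_sub_right]

lemma uu_sub (v a b : Pt) : uu v (a - b) = uu v a - uu v b := by
  simp only [uu, PiLp.sub_apply]
  ring

/-! ### Pure real auxiliary lemmas -/

lemma cross_eq {n0 n1 x0 x1 y0 y1 : ℝ} (hn : n0 ≠ 0 ∨ n1 ≠ 0)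
    (hx : n0*x0 + n1*x1 = 0) (hy : n0*y0 + n1*y1 = 0) : x0*y1 = x1*y0 := by
  rcases hn with h | h
  · have h1 : n0 * (x0*y1 - x1*y0) = 0 := by linear_combination y1 * hx - x1 * hy
    have := (mul_eq_zero.1 h1).resolve_left h
    linarith
  · have h1 : n1 * (x0*y1 - x1*y0) = 0 := by linear_combination -y0 * hx + x0 * hy
    have := (mul_eq_zero.1 h1).resolve_left h
    linarith

lemma exists_scalar {x0 x1 y0 y1 : ℝ} (hx : ¬(x0 = 0 ∧ x1 = 0)) (hc : x0*y1 = x1*y0) :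
    ∃ t : ℝ, y0 = t*x0 ∧ y1 = t*x1 := by
  by_cases h0 : x0 = 0
  · have h1 : x1 ≠ 0 := fun h => hx ⟨h0, h⟩
    refine ⟨y1/x1, ?_, by field_simp⟩
    have hz : x1 * y0 = 0 := by rw [← hc, h0]; ring
    have hy0 : y0 = 0 := by
      rcases mul_eq_zero.1 hz with h | h
      · exact absurd h h1
      · exact h
    rw [hy0, h0]; ring
  · refine ⟨y0/x0, by field_simp, ?_⟩
    field_simp
    linarith [hc]

/-- Three distinct points on a line cannot all lie on a circle. -/
lemma three_line_sphere {A B L qc uc r a1 b1 a2 b2 a3 b3 : ℝ}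
    (hn : A ≠ 0 ∨ B ≠ 0)
    (hL1 : A*a1 + B*b1 = L) (hL2 : A*a2 + B*b2 = L) (hL3 : A*a3 + B*b3 = L)
    (hS1 : (a1-qc)^2 + (b1-uc)^2 = r^2) (hS2 : (a2-qc)^2 + (b2-uc)^2 = r^2)
    (hS3 : (a3-qc)^2 + (b3-uc)^2 = r^2)
    (h12 : ¬(a1 = a2 ∧ b1 = b2)) (h13 : ¬(a1 = a3 ∧ b1 = b3))
    (h23 : ¬(a2 = a3 ∧ b2 = b3)) : False := by
  have hx : A*(a2-a1) + B*(b2-b1) = 0 := by linear_combination hL2 - hL1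
  have hy : A*(a3-a1) + B*(b3-b1) = 0 := by linear_combination hL3 - hL1
  have hcr : (a2-a1)*(b3-b1) = (b2-b1)*(a3-a1) := cross_eq hn hx hy
  have hxne : ¬(a2-a1 = 0 ∧ b2-b1 = 0) := by
    rintro ⟨h1, h2⟩; exact h12 ⟨by linarith, by linarith⟩
  obtain ⟨t, ht0, ht1⟩ := exists_scalar hxne hcr
  have e3a : a3 = a1 + t*(a2-a1) := by linarith
  have e3b : b3 = b1 + t*(b2-b1) := by linarith
  subst e3a e3b
  have h2 : 2*((a1-qc)*(a2-a1) + (b1-uc)*(b2-b1)) + ((a2-a1)^2+(b2-b1)^2) = 0 := by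
    linear_combination hS2 - hS1
  have key : ((a2-a1)^2+(b2-b1)^2) * (t*(1-t)) = 0 := by
    linear_combination t * h2 - hS3 + hS1
  have hXpos : 0 < (a2-a1)^2+(b2-b1)^2 := by
    rcases not_and_or.1 hxne with h | h
    · have := sq_pos_of_ne_zero h
      nlinarith [sq_nonneg (b2-b1)]
    · have := sq_pos_of_ne_zero h
      nlinarith [sq_nonneg (a2-a1)]
  have ht01 : t*(1-t) = 0 := by
    rcases mul_eq_zero.1 key with h | h
    · exact absurd h (ne_of_gt hXpos)
    · exact h
  rcases mul_eq_zero.1 ht01 with h | h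
  · subst h
    exact h13 ⟨by linarith, by linarith⟩
  · have ht : t = 1 := by linarith
    subst ht
    exact h23 ⟨by linarith, by linarith⟩

lemma encard_le_two_of_no_three {s : Set Pt}
    (h : ∀ a ∈ s, ∀ b ∈ s, ∀ c ∈ s, a ≠ b → a ≠ c → b ≠ c → False) : s.encard ≤ 2 := by
  by_contra hc
  have h3 : (3 : ℕ∞) ≤ s.encard := Order.add_one_le_of_lt (not_le.1 hc)
  obtain ⟨t, hts, ht⟩ := Set.exists_subset_encard_eq h3
  obtain ⟨a, b, c, hab, hac, hbc, rfl⟩ := Set.encard_eq_three.1 ht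
  exact h a (hts (by simp)) b (hts (by simp)) c (hts (by simp)) hab hac hbc

lemma ne_coords {v : Pt} (hv : v 0 ^ 2 + v 1 ^ 2 = 1) {p p' : Pt} (h : p ≠ p') :
    ¬(qq v p = qq v p' ∧ uu v p = uu v p') := fun ⟨h1, h2⟩ => h (inj2 hv h1 h2)

lemma line_sub {v : Pt} (hv : v 0 ^ 2 + v 1 ^ 2 = 1) {n n' : Pt} {b b' : ℝ} (hn : n ≠ 0)
    {p1 p2 : Pt} (h12 : p1 ≠ p2)
    (hp11 : (inner ℝ n p1 : ℝ) = b) (hp12 : (inner ℝ n' p1 : ℝ) = b')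
    (hp21 : (inner ℝ n p2 : ℝ) = b) (hp22 : (inner ℝ n' p2 : ℝ) = b') :
    {x : Pt | (inner ℝ n x : ℝ) = b} ⊆ {x : Pt | (inner ℝ n' x : ℝ) = b'} := by
  intro z hz
  simp only [Set.mem_setOf_eq] at hz ⊢
  rw [inner_decomp hv] at hz hp11 hp12 hp21 hp22 ⊢
  have hx : qq v n * (qq v p2 - qq v p1) + uu v n * (uu v p2 - uu v p1) = 0 := by
    linear_combination hp21 - hp11
  have hy : qq v n * (qq v z - qq v p1) + uu v n * (uu v z - uu v p1) = 0 := by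
    linear_combination hz - hp11
  have hcr := cross_eq (ne_zero_coords hv hn) hx hy
  have hxne : ¬(qq v p2 - qq v p1 = 0 ∧ uu v p2 - uu v p1 = 0) := by
    rintro ⟨h1, h2⟩
    exact ne_coords hv h12 ⟨by linarith, by linarith⟩
  obtain ⟨t, ht0, ht1⟩ := exists_scalar hxne hcr
  linear_combination qq v n' * ht0 + uu v n' * ht1 + hp12 + t * (hp22 - hp12)

/-- Main geometric lemma: two distinct circles-or-lines meet in at most two points. -/
lemma inter_le_two {v : Pt} (hv : v 0 ^ 2 + v 1 ^ 2 = 1) {C C' : Set Pt}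
    (hC : IsCircleOrLine C) (hC' : IsCircleOrLine C') (hne : C ≠ C') :
    (C ∩ C').encard ≤ 2 := by
  have sphere_case : ∀ (c : Pt) (r : ℝ), 0 < r → ∀ (n : Pt) (b : ℝ), n ≠ 0 →
      ∀ (S : Set Pt), S ⊆ Metric.sphere c r → S ⊆ {x : Pt | (inner ℝ n x : ℝ) = b} →
      S.encard ≤ 2 := by
    intro c r hr n b hn S hS1 hS2
    apply encard_le_two_of_no_three
    intro p1 hp1 p2 hp2 p3 hp3 h12 h13 h23
    have e1 := (sphere_mem_iff hv hr p1).1 (hS1 hp1)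
    have e2 := (sphere_mem_iff hv hr p2).1 (hS1 hp2)
    have e3 := (sphere_mem_iff hv hr p3).1 (hS1 hp3)
    have l1 := hS2 hp1; have l2 := hS2 hp2; have l3 := hS2 hp3
    simp only [Set.mem_setOf_eq] at l1 l2 l3
    rw [inner_decomp hv] at l1 l2 l3
    exact three_line_sphere (ne_zero_coords hv hn) l1 l2 l3 e1 e2 e3
      (ne_coords hv h12) (ne_coords hv h13) (ne_coords hv h23)
  rcases hC with ⟨c, r, hr, rfl⟩ | ⟨n, b, hn, rfl⟩
  · rcases hC' with ⟨c', r', hr', rfl⟩ | ⟨n', b', hn', rfl⟩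
    · -- circle-circle
      by_cases hcc : c = c'
      · subst hcc
        have hrr : r ≠ r' := fun h => hne (by rw [h])
        have hempty : Metric.sphere c r ∩ Metric.sphere c r' = ∅ := by
          ext p
          simp only [Set.mem_inter_iff, Metric.mem_sphere, Set.mem_empty_iff_false, iff_false]
          rintro ⟨h1, h2⟩; exact hrr (h1 ▸ h2)
        rw [hempty]; simp
      · -- distinct centers: common points lie on a common line
        have hnn : c' - c ≠ 0 := sub_ne_zero.2 (Ne.symm hcc)
        apply sphere_case c r hr (c' - c)
          (((qq v c')^2 + (uu v c')^2 - (qq v c)^2 - (uu v c)^2 + r^2 - r'^2)/2) hnn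
          _ Set.inter_subset_left
        rintro p ⟨h1, h2⟩
        rw [sphere_mem_iff hv hr] at h1
        rw [sphere_mem_iff hv hr'] at h2
        show (inner ℝ (c' - c) p : ℝ) = _
        rw [inner_decomp hv, qq_sub, uu_sub]
        linear_combination (1/2) * h1 - (1/2) * h2
    · -- circle-line
      exact sphere_case c r hr n' b' hn' _ Set.inter_subset_left Set.inter_subset_right
  · rcases hC' with ⟨c', r', hr', rfl⟩ | ⟨n', b', hn', rfl⟩
    · -- line-circle
      exact sphere_case c' r' hr' n b hn _ Set.inter_subset_right Set.inter_subset_left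
    · -- line-line
      refine le_trans ?_ (by norm_num : (1 : ℕ∞) ≤ 2)
      rw [Set.encard_le_one_iff]
      intro p1 p2 hp1 hp2
      by_contra h12
      apply hne
      apply subset_antisymm
      · exact line_sub hv hn h12 hp1.1 hp1.2 hp2.1 hp2.2
      · exact line_sub hv hn' h12 hp1.2 hp1.1 hp2.2 hp2.1


open Set

/-! ### Real inverse continuity -/
-- pure real inverse continuity
lemma inv_cont {g : ℝ → ℝ} (hg : StrictMonoOn g (Icc 0 1)) {t₀ : ℝ} (ht₀ : t₀ ∈ Icc 0 1)
    {ε : ℝ} (hε : 0 < ε) :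
    ∃ δ > 0, ∀ t ∈ Icc (0:ℝ) 1, |g t - g t₀| < δ → |t - t₀| < ε := by
  obtain ⟨ht0, ht1⟩ := ht₀
  set δ₁ : ℝ := if h : 0 ≤ t₀ - ε then g t₀ - g (t₀ - ε) else 1 with hδ₁
  set δ₂ : ℝ := if h : t₀ + ε ≤ 1 then g (t₀ + ε) - g t₀ else 1 with hδ₂
  have hmem : ∀ s : ℝ, 0 ≤ s → s ≤ 1 → s ∈ Icc (0:ℝ) 1 := fun s h1 h2 => ⟨h1, h2⟩
  have hδ₁pos : 0 < δ₁ := by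
    rw [hδ₁]
    split_ifs with h
    · have := hg (hmem _ h (by linarith)) (hmem _ ht0 ht1) (by linarith)
      linarith
    · norm_num
  have hδ₂pos : 0 < δ₂ := by
    rw [hδ₂]
    split_ifs with h
    · have := hg (hmem _ ht0 ht1) (hmem _ (by linarith) h) (by linarith)
      linarith
    · norm_num
  refine ⟨min δ₁ δ₂, lt_min hδ₁pos hδ₂pos, ?_⟩
  rintro t ⟨htl, htr⟩ habs
  rw [abs_lt] at habs ⊢
  constructor
  · by_contra hcon
    push_neg at hcon
    have h : 0 ≤ t₀ - ε := by linarith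
    have hle : g t ≤ g (t₀ - ε) :=
      (hg.monotoneOn) (hmem _ htl htr) (hmem _ h (by linarith)) (by linarith)
    have : δ₁ = g t₀ - g (t₀ - ε) := by rw [hδ₁, dif_pos h]
    have := habs.1
    have := min_le_left δ₁ δ₂
    linarith
  · by_contra hcon
    push_neg at hcon
    have h : t₀ + ε ≤ 1 := by linarith
    have hle : g (t₀ + ε) ≤ g t :=
      (hg.monotoneOn) (hmem _ (by linarith) h) (hmem _ htl htr) (by linarith)
    have : δ₂ = g (t₀ + ε) - g t₀ := by rw [hδ₂, dif_pos h]
    have := habs.2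
    have := min_le_right δ₁ δ₂
    linarith


section Curve

variable {v : Pt} {f : ℝ → Pt} {γ : Set Pt} {m : ℕ} {x : ℕ → ℝ}

lemma qf_cont (hf : IsMonotoneCircularCurve v f γ m x) :
    ContinuousOn (fun t : ℝ => (inner ℝ v (f t) : ℝ)) (Icc 0 1) :=
  ContinuousOn.inner continuousOn_const hf.1

lemma x_mono (hf : IsMonotoneCircularCurve v f γ m x) :
    ∀ j ≤ m, ∀ i ≤ j, x i ≤ x j := by
  intro j
  induction j with
  | zero => intro _ i hi; interval_cases i; rfl
  | succ k ih =>
    intro hk i hi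
    rcases Nat.lt_or_ge i (k+1) with h | h
    · have h1 : x i ≤ x k := ih (by omega) i (by omega)
      have h2 : x k < x (k+1) := hf.2.2.2.2.2.1 k (by omega)
      linarith
    · have : i = k + 1 := by omega
      rw [this]

lemma x_mem (hf : IsMonotoneCircularCurve v f γ m x) {i : ℕ} (hi : i ≤ m) :
    x i ∈ Icc (0:ℝ) 1 := by
  constructor
  · rw [← hf.2.2.2.1]; exact x_mono hf i hi 0 (by omega)
  · rw [← hf.2.2.2.2.1]; exact x_mono hf m le_rfl i hi

lemma mem_param (hf : IsMonotoneCircularCurve v f γ m x) {p : Pt} (hp : p ∈ γ) :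
    ∃ t ∈ Icc (0:ℝ) 1, f t = p := by
  rw [← hf.2.1] at hp; exact hp

lemma q_injOn (hf : IsMonotoneCircularCurve v f γ m x) {p p' : Pt}
    (hp : p ∈ γ) (hp' : p' ∈ γ) (h : (inner ℝ v p : ℝ) = inner ℝ v p') : p = p' := by
  obtain ⟨t, ht, rfl⟩ := mem_param hf hp
  obtain ⟨t', ht', rfl⟩ := mem_param hf hp'
  rw [hf.2.2.1.injOn ht ht' h]

lemma q_range (hf : IsMonotoneCircularCurve v f γ m x) {t : ℝ} (ht : t ∈ Icc (0:ℝ) 1) :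
    (inner ℝ v (f t) : ℝ) ∈ Icc (inner ℝ v (f 0) : ℝ) (inner ℝ v (f 1) : ℝ) := by
  have h0 : (0:ℝ) ∈ Icc (0:ℝ) 1 := by norm_num
  have h1 : (1:ℝ) ∈ Icc (0:ℝ) 1 := by norm_num
  exact ⟨hf.2.2.1.monotoneOn h0 ht ht.1, hf.2.2.1.monotoneOn ht h1 ht.2⟩

lemma locate (hf : IsMonotoneCircularCurve v f γ m x) {i : ℕ} (hi : i < m)
    {t : ℝ} (ht : t ∈ Icc (0:ℝ) 1)
    (h1 : (inner ℝ v (f (x i)) : ℝ) ≤ inner ℝ v (f t))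
    (h2 : (inner ℝ v (f t) : ℝ) ≤ inner ℝ v (f (x (i+1)))) :
    f t ∈ f '' Icc (x i) (x (i+1)) := by
  refine ⟨t, ⟨?_, ?_⟩, rfl⟩
  · by_contra hc
    push_neg at hc
    exact absurd h1 (not_le.2 (hf.2.2.1 ht (x_mem hf (le_of_lt hi)) hc))
  · by_contra hc
    push_neg at hc
    exact absurd h2 (not_le.2 (hf.2.2.1 (x_mem hf hi) ht hc))

lemma pointNear (hf : IsMonotoneCircularCurve v f γ m x) {t₀ : ℝ} (ht₀ : t₀ ∈ Icc (0:ℝ) 1)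
    {ε : ℝ} (hε : 0 < ε) :
    ∃ δ > 0, ∀ r : ℝ, r ∈ Icc (inner ℝ v (f 0) : ℝ) (inner ℝ v (f 1) : ℝ) →
      |r - (inner ℝ v (f t₀) : ℝ)| < δ →
      ∃ t ∈ Icc (0:ℝ) 1, (inner ℝ v (f t) : ℝ) = r ∧ dist (f t) (f t₀) < ε := by
  have hfc := hf.1 t₀ ht₀
  rw [Metric.continuousWithinAt_iff] at hfc
  obtain ⟨ε', hε', hball⟩ := hfc ε hε
  obtain ⟨δ, hδ, hinv⟩ := inv_cont hf.2.2.1 ht₀ hε'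
  refine ⟨δ, hδ, ?_⟩
  intro r hr hnear
  obtain ⟨t, ht, hqt⟩ := intermediate_value_Icc (by norm_num : (0:ℝ) ≤ 1) (qf_cont hf) hr
  refine ⟨t, ht, hqt, ?_⟩
  apply hball ht
  rw [Real.dist_eq]
  apply hinv t ht
  show |(inner ℝ v (f t) : ℝ) - inner ℝ v (f t₀)| < δ
  rw [show (inner ℝ v (f t) : ℝ) = r from hqt]
  exact hnear
end Curve

section Slab
variable {v : Pt} {f f' : ℝ → Pt} {γ γ' : Set Pt} {m m' : ℕ} {x x' : ℕ → ℝ}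

lemma slab_bound (hv1 : v 0 ^ 2 + v 1 ^ 2 = 1)
    (hf : IsMonotoneCircularCurve v f γ m x)
    (hf' : IsMonotoneCircularCurve v f' γ' m' x')
    {lo hi : ℝ} {i j : ℕ} (hij : i < m) (hj : j < m')
    (hloi : (inner ℝ v (f (x i)) : ℝ) ≤ lo) (hhii : hi ≤ (inner ℝ v (f (x (i+1))) : ℝ))
    (hloj : (inner ℝ v (f' (x' j)) : ℝ) ≤ lo) (hhij : hi ≤ (inner ℝ v (f' (x' (j+1))) : ℝ)) :
    {p : Pt | IsProperIntersection γ γ' p ∧ (inner ℝ v p : ℝ) ∈ Icc lo hi}.encard ≤ 2 := by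
  set S := {p : Pt | IsProperIntersection γ γ' p ∧ (inner ℝ v p : ℝ) ∈ Icc lo hi} with hS
  -- membership facts
  have hSγ : ∀ p ∈ S, p ∈ γ := fun p hp => hp.1.1.1
  have hSγ' : ∀ p ∈ S, p ∈ γ' := fun p hp => hp.1.1.2
  -- the degenerate case
  by_cases hlohi : lo < hi
  swap
  · refine le_trans ?_ (by norm_num : (1:ℕ∞) ≤ 2)
    rw [Set.encard_le_one_iff]
    intro a b ha hb
    have h1 : (inner ℝ v a : ℝ) = lo := le_antisymm (le_trans ha.2.2 (not_lt.1 hlohi)) ha.2.1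
    have h2 : (inner ℝ v b : ℝ) = lo := le_antisymm (le_trans hb.2.2 (not_lt.1 hlohi)) hb.2.1
    exact q_injOn hf (hSγ a ha) (hSγ b hb) (by rw [h1, h2])
  -- the circles
  obtain ⟨C, hC, harc⟩ := hf.2.2.2.2.2.2 i hij
  obtain ⟨C', hC', harc'⟩ := hf'.2.2.2.2.2.2 j hj
  have hq0 : (inner ℝ v (f 0) : ℝ) ≤ lo := by
    have e0 : f 0 = f (x 0) := by rw [hf.2.2.2.1]
    rw [e0]
    refine le_trans ?_ hloi
    exact hf.2.2.1.monotoneOn (x_mem hf (by omega)) (x_mem hf (by omega))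
      (x_mono hf i (by omega) 0 (by omega))
  have hq1 : hi ≤ (inner ℝ v (f 1) : ℝ) := by
    have e1 : f 1 = f (x m) := by rw [hf.2.2.2.2.1]
    rw [e1]
    refine le_trans hhii ?_
    exact hf.2.2.1.monotoneOn (x_mem hf (by omega)) (x_mem hf (by omega))
      (x_mono hf m (by omega) (i+1) (by omega))
  have hq0' : (inner ℝ v (f' 0) : ℝ) ≤ lo := by
    have e0 : f' 0 = f' (x' 0) := by rw [hf'.2.2.2.1]
    rw [e0]
    refine le_trans ?_ hloj
    exact hf'.2.2.1.monotoneOn (x_mem hf' (by omega)) (x_mem hf' (by omega))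
      (x_mono hf' j (by omega) 0 (by omega))
  have hq1' : hi ≤ (inner ℝ v (f' 1) : ℝ) := by
    have e1 : f' 1 = f' (x' m') := by rw [hf'.2.2.2.2.1]
    rw [e1]
    refine le_trans hhij ?_
    exact hf'.2.2.1.monotoneOn (x_mem hf' (by omega)) (x_mem hf' (by omega))
      (x_mono hf' m' (by omega) (j+1) (by omega))
  -- every point of S is on both circles
  have hmemC : ∀ t : ℝ, t ∈ Icc (0:ℝ) 1 → (inner ℝ v (f t) : ℝ) ∈ Icc lo hi → f t ∈ C := by
    intro t ht hq
    exact harc (locate hf hij ht (le_trans hloi hq.1) (le_trans hq.2 hhii))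
  have hmemC' : ∀ t : ℝ, t ∈ Icc (0:ℝ) 1 → (inner ℝ v (f' t) : ℝ) ∈ Icc lo hi → f' t ∈ C' := by
    intro t ht hq
    exact harc' (locate hf' hj ht (le_trans hloj hq.1) (le_trans hq.2 hhij))
  have hSC : ∀ p ∈ S, p ∈ C := by
    intro p hp
    obtain ⟨t, ht, rfl⟩ := mem_param hf (hSγ p hp)
    exact hmemC t ht hp.2
  have hSC' : ∀ p ∈ S, p ∈ C' := by
    intro p hp
    obtain ⟨t, ht, rfl⟩ := mem_param hf' (hSγ' p hp)
    exact hmemC' t ht hp.2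
  by_cases hCC : C = C'
  swap
  · refine le_trans (Set.encard_mono ?_) (inter_le_two hv1 hC hC' hCC)
    exact fun p hp => ⟨hSC p hp, hSC' p hp⟩
  subst hCC
  -- approach lemma
  have happr : ∀ p ∈ S, ∀ η : ℝ, 0 < η → ∃ p₁ p₂ : Pt, p₁ ≠ p₂ ∧ p₁ ∈ C ∧ p₂ ∈ C ∧
      (inner ℝ v p₁ : ℝ) = (inner ℝ v p₂ : ℝ) ∧ dist p₁ p < η ∧ dist p₂ p < η := by
    intro p hp η hη
    obtain ⟨t₀, ht₀, hft₀⟩ := mem_param hf (hSγ p hp)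
    obtain ⟨s₀, hs₀, hfs₀⟩ := mem_param hf' (hSγ' p hp)
    obtain ⟨U, hU, hUiso⟩ := hp.1.2
    obtain ⟨ε₀, hε₀, hball⟩ := Metric.mem_nhds_iff.1 hU
    set η' := min η ε₀ with hη'
    have hη'pos : 0 < η' := lt_min hη hε₀
    obtain ⟨δ₁, hδ₁, hnear₁⟩ := pointNear hf ht₀ hη'pos
    obtain ⟨δ₂, hδ₂, hnear₂⟩ := pointNear hf' hs₀ hη'pos
    set δ := min δ₁ δ₂ with hδdef
    have hδpos : 0 < δ := lt_min hδ₁ hδ₂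
    -- pick r
    have hqp : (inner ℝ v p : ℝ) ∈ Icc lo hi := hp.2
    obtain ⟨r, hrIcc, hrne, hrnear⟩ :
        ∃ r : ℝ, r ∈ Icc lo hi ∧ r ≠ (inner ℝ v p : ℝ) ∧ |r - (inner ℝ v p : ℝ)| < δ := by
      by_cases hcase : (inner ℝ v p : ℝ) < hi
      · refine ⟨min hi ((inner ℝ v p : ℝ) + δ/2), ⟨?_, min_le_left _ _⟩, ?_, ?_⟩
        · exact le_min (le_of_lt hlohi) (by linarith [hqp.1, hδpos])
        · have : (inner ℝ v p : ℝ) < min hi ((inner ℝ v p : ℝ) + δ/2) :=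
            lt_min hcase (by linarith)
          exact ne_of_gt this
        · have h1 : (inner ℝ v p : ℝ) < min hi ((inner ℝ v p : ℝ) + δ/2) :=
            lt_min hcase (by linarith)
          have h2 : min hi ((inner ℝ v p : ℝ) + δ/2) ≤ (inner ℝ v p : ℝ) + δ/2 :=
            min_le_right _ _
          rw [abs_lt]; constructor <;> linarith
      · have hqhi : (inner ℝ v p : ℝ) = hi := le_antisymm hqp.2 (not_lt.1 hcase)
        refine ⟨max lo ((inner ℝ v p : ℝ) - δ/2), ⟨le_max_left _ _, ?_⟩, ?_, ?_⟩
        · exact max_le (le_of_lt hlohi) (by linarith [hqp.2])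
        · have : max lo ((inner ℝ v p : ℝ) - δ/2) < (inner ℝ v p : ℝ) :=
            max_lt (hqhi ▸ hlohi) (by linarith)
          exact ne_of_lt this
        · have h1 : max lo ((inner ℝ v p : ℝ) - δ/2) < (inner ℝ v p : ℝ) :=
            max_lt (hqhi ▸ hlohi) (by linarith)
          have h2 : (inner ℝ v p : ℝ) - δ/2 ≤ max lo ((inner ℝ v p : ℝ) - δ/2) :=
            le_max_right _ _
          rw [abs_lt]; constructor <;> linarith
    -- get the two nearby points
    have hr1 : r ∈ Icc (inner ℝ v (f 0) : ℝ) (inner ℝ v (f 1) : ℝ) :=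
      ⟨le_trans hq0 hrIcc.1, le_trans hrIcc.2 hq1⟩
    have hr2 : r ∈ Icc (inner ℝ v (f' 0) : ℝ) (inner ℝ v (f' 1) : ℝ) :=
      ⟨le_trans hq0' hrIcc.1, le_trans hrIcc.2 hq1'⟩
    have hqft₀ : (inner ℝ v (f t₀) : ℝ) = (inner ℝ v p : ℝ) := by rw [hft₀]
    have hqfs₀ : (inner ℝ v (f' s₀) : ℝ) = (inner ℝ v p : ℝ) := by rw [hfs₀]
    obtain ⟨t, ht, hqt, hdt⟩ := hnear₁ r hr1 (by
      rw [hqft₀]; exact lt_of_lt_of_le hrnear (min_le_left _ _))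
    obtain ⟨s, hs, hqs, hds⟩ := hnear₂ r hr2 (by
      rw [hqfs₀]; exact lt_of_lt_of_le hrnear (min_le_right _ _))
    rw [hft₀] at hdt
    rw [hfs₀] at hds
    refine ⟨f t, f' s, ?_, ?_, ?_, ?_, ?_, ?_⟩
    · -- distinct
      intro heq
      have hmem1 : f t ∈ γ := by rw [← hf.2.1]; exact ⟨t, ht, rfl⟩
      have hmem2 : f t ∈ γ' := by rw [heq, ← hf'.2.1]; exact ⟨s, hs, rfl⟩
      have hU1 : f t ∈ U := hball (by
        rw [Metric.mem_ball]; exact lt_of_lt_of_le hdt (min_le_right _ _))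
      have : f t ∈ U ∩ (γ ∩ γ') := ⟨hU1, hmem1, hmem2⟩
      rw [hUiso] at this
      have : f t = p := this
      apply hrne
      rw [← hqt, this]
    · exact hmemC t ht (by rw [hqt]; exact hrIcc)
    · exact hmemC' s hs (by rw [hqs]; exact hrIcc)
    · rw [hqt, hqs]
    · exact lt_of_lt_of_le hdt (min_le_left _ _)
    · exact lt_of_lt_of_le hds (min_le_left _ _)
  clear hmemC hmemC'
  -- case on circle vs line
  rcases hC with ⟨c, ρ, hρ, rfl⟩ | ⟨n, b, hn, rfl⟩
  · -- circle case: all points of S have uu v p = uu v c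
    have huu : ∀ p ∈ S, uu v p = uu v c := by
      intro p hp
      by_contra hne
      have habs : 0 < |uu v p - uu v c| := abs_pos.2 (sub_ne_zero.2 hne)
      obtain ⟨p₁, p₂, h12, hp₁, hp₂, hq12, hd1, hd2⟩ :=
        happr p hp (|uu v p - uu v c| / 4) (by linarith)
      have e₁ := (sphere_mem_iff hv1 hρ p₁).1 hp₁
      have e₂ := (sphere_mem_iff hv1 hρ p₂).1 hp₂
      have hqq12 : qq v p₁ = qq v p₂ := hq12
      have husum : uu v p₁ + uu v p₂ = 2 * uu v c := by
        have hfac : (uu v p₁ - uu v p₂) * (uu v p₁ + uu v p₂ - 2 * uu v c) = 0 := by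
          linear_combination e₁ - e₂ - (qq v p₁ + qq v p₂ - 2 * qq v c) * hqq12
        rcases mul_eq_zero.1 hfac with h | h
        · exfalso
          apply h12
          apply inj2 hv1 hqq12
          linarith
        · linarith
      have hub1 : |uu v p₁ - uu v p| ≤ dist p₁ p := u_dist hv1 p₁ p
      have hub2 : |uu v p₂ - uu v p| ≤ dist p₂ p := u_dist hv1 p₂ p
      have h2 : (2:ℝ) * (uu v p - uu v c) = (uu v p - uu v p₁) + (uu v p - uu v p₂) := by
        linarith
      have h3 : 2 * |uu v p - uu v c| ≤ |uu v p - uu v p₁| + |uu v p - uu v p₂| := by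
        calc 2 * |uu v p - uu v c| = |(2:ℝ) * (uu v p - uu v c)| := by
              rw [abs_mul]; norm_num
          _ = |(uu v p - uu v p₁) + (uu v p - uu v p₂)| := by rw [h2]
          _ ≤ _ := abs_add_le _ _
      rw [abs_sub_comm (uu v p) (uu v p₁), abs_sub_comm (uu v p) (uu v p₂)] at h3
      linarith [lt_of_le_of_lt hub1 hd1, lt_of_le_of_lt hub2 hd2]
    -- hence q-values in a pair; conclude
    have hqval : ∀ p ∈ S, (inner ℝ v p : ℝ) = qq v c - ρ ∨ (inner ℝ v p : ℝ) = qq v c + ρ := by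
      intro p hp
      have e := (sphere_mem_iff hv1 hρ p).1 (hSC p hp)
      rw [huu p hp] at e
      have hfac : (qq v p - (qq v c - ρ)) * (qq v p - (qq v c + ρ)) = 0 := by
        linear_combination e
      rcases mul_eq_zero.1 hfac with h | h
      · left
        have hq : qq v p = qq v c - ρ := by linarith [sub_eq_zero.1 h]
        exact hq
      · right
        have hq : qq v p = qq v c + ρ := by linarith [sub_eq_zero.1 h]
        exact hq
    have himg : (fun p => (inner ℝ v p : ℝ)) '' S ⊆ {qq v c - ρ, qq v c + ρ} := by
      rintro r ⟨p, hp, rfl⟩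
      rcases hqval p hp with h | h
      · left; exact h
      · right; exact h
    have hinj : Set.InjOn (fun p => (inner ℝ v p : ℝ)) S := by
      intro a ha b hb hab
      exact q_injOn hf (hSγ a ha) (hSγ b hb) hab
    calc S.encard = ((fun p => (inner ℝ v p : ℝ)) '' S).encard := (hinj.encard_image).symm
      _ ≤ ({qq v c - ρ, qq v c + ρ} : Set ℝ).encard := Set.encard_mono himg
      _ ≤ 2 := by
          refine le_trans (Set.encard_insert_le _ _) ?_
          rw [Set.encard_singleton]
          norm_num
  · -- line case
    by_cases hun : uu v n = 0
    · -- q is constant on the line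
      have hqn : qq v n ≠ 0 := by
        rcases ne_zero_coords hv1 hn with h | h
        · exact h
        · exact absurd hun h
      refine le_trans ?_ (by norm_num : (1:ℕ∞) ≤ 2)
      rw [Set.encard_le_one_iff]
      intro p p' hp hp'
      have hla : (inner ℝ n p : ℝ) = b := hSC p hp
      have hlb : (inner ℝ n p' : ℝ) = b := hSC p' hp'
      rw [inner_decomp hv1] at hla hlb
      rw [hun] at hla hlb
      apply q_injOn hf (hSγ p hp) (hSγ p' hp')
      show qq v p = qq v p'
      have h1 : qq v n * qq v p = qq v n * qq v p' := by linarith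
      exact mul_left_cancel₀ hqn h1
    · -- the line is a graph over q: S is empty
      have hSempty : S = ∅ := by
        ext p
        simp only [Set.mem_empty_iff_false, iff_false]
        intro hp
        obtain ⟨p₁, p₂, h12, hp₁, hp₂, hq12, _, _⟩ := happr p hp 1 one_pos
        have l₁ : (inner ℝ n p₁ : ℝ) = b := hp₁
        have l₂ : (inner ℝ n p₂ : ℝ) = b := hp₂
        rw [inner_decomp hv1] at l₁ l₂
        have hqq12 : qq v p₁ = qq v p₂ := hq12
        have huu12 : uu v p₁ = uu v p₂ := by
          have : uu v n * (uu v p₁ - uu v p₂) = 0 := by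
            linear_combination l₁ - l₂ - qq v n * hqq12
          rcases mul_eq_zero.1 this with h | h
          · exact absurd h hun
          · linarith
        exact h12 (inj2 hv1 hqq12 huu12)
      rw [hSempty]
      simp
end Slab

lemma cover_bound (N : ℕ) (T : Set Pt) (S : ℕ → Set Pt)
    (hsub : T ⊆ ⋃ k ∈ Finset.range N, S k) (hb : ∀ k < N, (S k).encard ≤ 2) :
    T.encard ≤ 2 * N := by
  induction N generalizing T with
  | zero =>
    have : T = ∅ := by
      rw [Set.eq_empty_iff_forall_notMem]
      intro p hp
      have := hsub hp
      simp at this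
    rw [this]
    simp
  | succ N ih =>
    have h1 : T ⊆ (T ∩ ⋃ k ∈ Finset.range N, S k) ∪ (T ∩ S N) := by
      intro p hp
      have hm := hsub hp
      rw [Finset.range_add_one] at hm
      rw [Finset.set_biUnion_insert] at hm
      rcases hm with h | h
      · exact Or.inr ⟨hp, h⟩
      · exact Or.inl ⟨hp, h⟩
    calc T.encard ≤ ((T ∩ ⋃ k ∈ Finset.range N, S k) ∪ (T ∩ S N)).encard :=
          Set.encard_mono h1
      _ ≤ (T ∩ ⋃ k ∈ Finset.range N, S k).encard + (T ∩ S N).encard :=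
          Set.encard_union_le _ _
      _ ≤ 2 * N + 2 := by
          refine add_le_add ?_ ?_
          · exact ih _ Set.inter_subset_right (fun k hk => hb k (by omega))
          · exact le_trans (Set.encard_mono Set.inter_subset_right) (hb N (by omega))
      _ = 2 * (N + 1 : ℕ) := by push_cast; ring

end Stmt10Aux

open Stmt10Aux in
theorem stmt10 (v : Pt) (hv : ‖v‖ = 1) (γ γ' : Set Pt)
    (f f' : ℝ → Pt) (m m' : ℕ) (x x' : ℕ → ℝ)
    (hf : IsMonotoneCircularCurve v f γ m x)
    (hf' : IsMonotoneCircularCurve v f' γ' m' x') :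
    {p : Pt | IsProperIntersection γ γ' p}.encard ≤ 2 * (m + m' + 1) := by
  classical
  have hv1 : v 0 ^ 2 + v 1 ^ 2 = 1 := hv_sq hv
  -- breakpoint values
  set B : Finset ℝ := ((Finset.range (m+1)).image (fun i => (inner ℝ v (f (x i)) : ℝ))) ∪
    ((Finset.range (m'+1)).image (fun j => (inner ℝ v (f' (x' j)) : ℝ))) with hB
  set K := B.card with hK
  set l := B.sort (· ≤ ·) with hl
  have hlen : l.length = K := Finset.length_sort _
  set b : ℕ → ℝ := fun k => if h : k < l.length then l.get ⟨k, h⟩ else 0 with hb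
  have hbmono : ∀ k k', k ≤ k' → k' < K → b k ≤ b k' := by
    intro k k' hkk hk'
    rcases eq_or_lt_of_le hkk with rfl | h
    · exact le_rfl
    · have hk'l : k' < l.length := hlen ▸ hk'
      have hkl : k < l.length := by omega
      rw [hb]
      simp only
      rw [dif_pos hkl, dif_pos hk'l]
      exact (Finset.pairwise_sort B (· ≤ ·)).rel_get_of_lt (by exact h)
  have hbsurj : ∀ c ∈ B, ∃ k, k < K ∧ b k = c := by
    intro c hc
    have hcl : c ∈ l := (Finset.mem_sort _).2 hc
    obtain ⟨⟨k, hk⟩, hval⟩ := List.mem_iff_get.1 hcl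
    refine ⟨k, hlen ▸ hk, ?_⟩
    rw [hb]; simp only; rw [dif_pos hk]; exact hval
  have hqfB : ∀ i ≤ m, (inner ℝ v (f (x i)) : ℝ) ∈ B := fun i hi =>
    Finset.mem_union_left _ (Finset.mem_image.2 ⟨i, Finset.mem_range.2 (by omega), rfl⟩)
  have hqf'B : ∀ j ≤ m', (inner ℝ v (f' (x' j)) : ℝ) ∈ B := fun j hj =>
    Finset.mem_union_right _ (Finset.mem_image.2 ⟨j, Finset.mem_range.2 (by omega), rfl⟩)
  have h01 : (inner ℝ v (f 0) : ℝ) < (inner ℝ v (f 1) : ℝ) :=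
    hf.2.2.1 (by norm_num) (by norm_num) one_pos
  have h01' : (inner ℝ v (f' 0) : ℝ) < (inner ℝ v (f' 1) : ℝ) :=
    hf'.2.2.1 (by norm_num) (by norm_num) one_pos
  have e0 : (inner ℝ v (f (x 0)) : ℝ) = (inner ℝ v (f 0) : ℝ) := by rw [hf.2.2.2.1]
  have e1 : (inner ℝ v (f (x m)) : ℝ) = (inner ℝ v (f 1) : ℝ) := by rw [hf.2.2.2.2.1]
  have e0' : (inner ℝ v (f' (x' 0)) : ℝ) = (inner ℝ v (f' 0) : ℝ) := by rw [hf'.2.2.2.1]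
  have e1' : (inner ℝ v (f' (x' m')) : ℝ) = (inner ℝ v (f' 1) : ℝ) := by rw [hf'.2.2.2.2.1]
  have hK2 : 2 ≤ K := by
    have := Finset.one_lt_card.2 ⟨_, hqfB 0 (by omega), _, hqfB m le_rfl, by
      rw [e0, e1]; exact ne_of_lt h01⟩
    omega
  have hrange : ∀ p ∈ γ, (inner ℝ v p : ℝ) ∈ Set.Icc (inner ℝ v (f 0) : ℝ) (inner ℝ v (f 1) : ℝ) := by
    intro p hp
    obtain ⟨t, ht, rfl⟩ := mem_param hf hp
    exact q_range hf ht
  have hrange' : ∀ p ∈ γ', (inner ℝ v p : ℝ) ∈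
      Set.Icc (inner ℝ v (f' 0) : ℝ) (inner ℝ v (f' 1) : ℝ) := by
    intro p hp
    obtain ⟨t, ht, rfl⟩ := mem_param hf' hp
    exact q_range hf' ht
  -- covering
  have hcover : ∀ p, IsProperIntersection γ γ' p →
      ∃ k, k + 1 < K ∧ b k ≤ (inner ℝ v p : ℝ) ∧ (inner ℝ v p : ℝ) ≤ b (k+1) := by
    intro p hp
    have hpγ : p ∈ γ := hp.1.1
    have h0 : (inner ℝ v (f 0) : ℝ) ≤ (inner ℝ v p : ℝ) := (hrange p hpγ).1
    have h1 : (inner ℝ v p : ℝ) ≤ (inner ℝ v (f 1) : ℝ) := (hrange p hpγ).2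
    obtain ⟨k₀, hk₀K, hk₀⟩ := hbsurj _ (hqfB 0 (by omega))
    obtain ⟨k₁, hk₁K, hk₁⟩ := hbsurj _ (hqfB m le_rfl)
    rw [e0] at hk₀
    rw [e1] at hk₁
    have hk₀le : k₀ ≤ K - 2 := by
      by_contra hcon
      have hk₀eq : k₀ = K - 1 := by omega
      have hle : b k₁ ≤ b k₀ := hbmono k₁ k₀ (by omega) hk₀K
      rw [hk₀, hk₁] at hle
      linarith
    obtain ⟨k, hkeq⟩ : ∃ k, k = Nat.findGreatest (fun k => b k ≤ (inner ℝ v p : ℝ)) (K - 2) :=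
      ⟨_, rfl⟩
    have hkspec : b k ≤ (inner ℝ v p : ℝ) := by
      rw [hkeq]
      exact Nat.findGreatest_spec (P := fun k => b k ≤ (inner ℝ v p : ℝ)) hk₀le
        (show b k₀ ≤ (inner ℝ v p : ℝ) by rw [hk₀]; exact h0)
    have hkle : k ≤ K - 2 := by rw [hkeq]; exact Nat.findGreatest_le _
    refine ⟨k, by omega, hkspec, ?_⟩
    rcases lt_or_eq_of_le hkle with hlt | heq
    · by_contra hcon
      push_neg at hcon
      have hlt1 : Nat.findGreatest (fun k => b k ≤ (inner ℝ v p : ℝ)) (K - 2) < k + 1 := by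
        rw [← hkeq]; omega
      have hgt : ¬ (b (k+1) ≤ (inner ℝ v p : ℝ)) :=
        Nat.findGreatest_is_greatest hlt1 (by omega)
      exact hgt (le_of_lt hcon)
    · have hgoal : b k₁ ≤ b (K - 1) := hbmono k₁ (K-1) (by omega) (by omega)
      have hk1eq : k + 1 = K - 1 := by omega
      rw [hk1eq]
      rw [hk₁] at hgoal
      linarith
  -- per-slab sets
  have hslab : ∀ k, k + 1 < K →
      ({p : Pt | IsProperIntersection γ γ' p ∧ (inner ℝ v p : ℝ) ∈
        Set.Icc (max (b k) (max (inner ℝ v (f 0) : ℝ) (inner ℝ v (f' 0) : ℝ)))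
          (min (b (k+1)) (min (inner ℝ v (f 1) : ℝ) (inner ℝ v (f' 1) : ℝ)))}).encard ≤ 2 := by
    intro k hk
    set lo := max (b k) (max (inner ℝ v (f 0) : ℝ) (inner ℝ v (f' 0) : ℝ)) with hlo
    set hi := min (b (k+1)) (min (inner ℝ v (f 1) : ℝ) (inner ℝ v (f' 1) : ℝ)) with hhi
    by_cases hd : lo < hi
    swap
    · refine le_trans ?_ (by norm_num : (1:ℕ∞) ≤ 2)
      rw [Set.encard_le_one_iff]
      intro a a' ha ha'
      have h1 : (inner ℝ v a : ℝ) = lo := le_antisymm (le_trans ha.2.2 (not_lt.1 hd)) ha.2.1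
      have h2 : (inner ℝ v a' : ℝ) = lo := le_antisymm (le_trans ha'.2.2 (not_lt.1 hd)) ha'.2.1
      exact q_injOn hf ha.1.1.1 ha'.1.1.1 (by rw [h1, h2])
    · have hfind : ∀ (g : ℝ → Pt) (μ : ℕ) (y : ℕ → ℝ),
          IsMonotoneCircularCurve v g ((g '' Set.Icc 0 1)) μ y →
          (inner ℝ v (g (y 0)) : ℝ) = (inner ℝ v (g 0) : ℝ) →
          (inner ℝ v (g (y μ)) : ℝ) = (inner ℝ v (g 1) : ℝ) →
          (∀ i ≤ μ, (inner ℝ v (g (y i)) : ℝ) ∈ B) →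
          (inner ℝ v (g 0) : ℝ) ≤ lo → hi ≤ (inner ℝ v (g 1) : ℝ) →
          ∃ i, i < μ ∧ (inner ℝ v (g (y i)) : ℝ) ≤ lo ∧ hi ≤ (inner ℝ v (g (y (i+1))) : ℝ) := by
        intro g μ y hg he0 he1 hmemB hglo hghi
        obtain ⟨i, hieq⟩ : ∃ i, i = Nat.findGreatest
            (fun i => (inner ℝ v (g (y i)) : ℝ) ≤ lo) μ := ⟨_, rfl⟩
        have hspec : (inner ℝ v (g (y i)) : ℝ) ≤ lo := by
          rw [hieq]
          exact Nat.findGreatest_spec (P := fun i => (inner ℝ v (g (y i)) : ℝ) ≤ lo)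
            (Nat.zero_le μ) (show (inner ℝ v (g (y 0)) : ℝ) ≤ lo by rw [he0]; exact hglo)
        have hile : i ≤ μ := by rw [hieq]; exact Nat.findGreatest_le _
        have hilt : i < μ := by
          rcases lt_or_eq_of_le hile with h | h
          · exact h
          · exfalso
            rw [h, he1] at hspec
            linarith
        have hnext : ¬((inner ℝ v (g (y (i+1))) : ℝ) ≤ lo) := by
          have hlt1 : Nat.findGreatest (fun i => (inner ℝ v (g (y i)) : ℝ) ≤ lo) μ < i + 1 := by
            rw [← hieq]; omega
          exact Nat.findGreatest_is_greatest hlt1 (by omega)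
        obtain ⟨k₂, hk₂K, hk₂⟩ := hbsurj _ (hmemB (i+1) (by omega))
        have hgt : b k < b k₂ := by
          rw [hk₂]
          exact lt_of_le_of_lt (le_max_left _ _) (not_le.1 hnext)
        have hk₂k : k + 1 ≤ k₂ := by
          by_contra hcon
          have : b k₂ ≤ b k := hbmono k₂ k (by omega) (by omega)
          linarith
        have hle2 : b (k+1) ≤ b k₂ := hbmono (k+1) k₂ hk₂k hk₂K
        refine ⟨i, hilt, hspec, ?_⟩
        rw [← hk₂]
        exact le_trans (min_le_left _ _) hle2
      have hγeq : f '' Set.Icc 0 1 = γ := hf.2.1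
      have hγ'eq : f' '' Set.Icc 0 1 = γ' := hf'.2.1
      obtain ⟨i, hilt, hloi, hhii⟩ := hfind f m x (by rw [hγeq]; exact hf) e0 e1 hqfB
        (le_trans (le_max_left _ _) (le_max_right _ _))
        (le_trans (min_le_right _ _) (le_trans (min_le_left _ _) le_rfl))
      obtain ⟨j, hjlt, hloj, hhij⟩ := hfind f' m' x' (by rw [hγ'eq]; exact hf') e0' e1' hqf'B
        (le_trans (le_max_right _ _) (le_max_right _ _))
        (le_trans (min_le_right _ _) (le_trans (min_le_right _ _) le_rfl))
      exact slab_bound hv1 hf hf' hilt hjlt hloi hhii hloj hhij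
  -- conclude
  have hsub : {p : Pt | IsProperIntersection γ γ' p} ⊆
      ⋃ k ∈ Finset.range (K - 1), {p : Pt | IsProperIntersection γ γ' p ∧ (inner ℝ v p : ℝ) ∈
        Set.Icc (max (b k) (max (inner ℝ v (f 0) : ℝ) (inner ℝ v (f' 0) : ℝ)))
          (min (b (k+1)) (min (inner ℝ v (f 1) : ℝ) (inner ℝ v (f' 1) : ℝ)))} := by
    intro p hp
    obtain ⟨k, hkK, hbk, hbk1⟩ := hcover p hp
    have hmem : p ∈ {p : Pt | IsProperIntersection γ γ' p ∧ (inner ℝ v p : ℝ) ∈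
        Set.Icc (max (b k) (max (inner ℝ v (f 0) : ℝ) (inner ℝ v (f' 0) : ℝ)))
          (min (b (k+1)) (min (inner ℝ v (f 1) : ℝ) (inner ℝ v (f' 1) : ℝ)))} := by
      refine ⟨hp, ?_, ?_⟩
      · exact max_le hbk (max_le (hrange p hp.1.1).1 (hrange' p hp.1.2).1)
      · exact le_min hbk1 (le_min (hrange p hp.1.1).2 (hrange' p hp.1.2).2)
    exact Set.mem_biUnion (Finset.mem_range.2 (show k < K - 1 by omega)) hmem
  have hmain := cover_bound (K - 1) _ _ hsub (fun k hk => hslab k (by omega))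
  refine le_trans hmain ?_
  have hKle : K - 1 ≤ m + m' + 1 := by
    have h1 : K ≤ (m+1) + (m'+1) := by
      rw [hK, hB]
      refine le_trans (Finset.card_union_le _ _) ?_
      refine add_le_add ?_ ?_
      · exact le_trans (Finset.card_image_le) (by rw [Finset.card_range])
      · exact le_trans (Finset.card_image_le) (by rw [Finset.card_range])
    omega
  calc (2 * (K - 1) : ℕ∞) ≤ 2 * ((m + m' + 1 : ℕ) : ℕ∞) := by
        apply mul_le_mul_right
        exact_mod_cast hKle
    _ = 2 * ((m : ℕ∞) + (m' : ℕ∞) + 1) := by push_cast; ring
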